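/- For a reversible Markov chain P on a finite state space Ω with stationary distribution π, given a family of paths Γ = {Γ_{xy}} using transitions of P to connect every pair of states, the Dirichlet forms satisfy E_{P̃}(f,f) ≤ B · E_P(f,f) for every function f : Ω → ℝ, where B is the congestion ratio B = max over transitions (x',y') with P(x',y') > 0 of (1/(π(x')P(x',y'))) · ∑_{(x,y) : Γ_{xy} ∋ (x',y')} π̃(x)P̃(x,y)|Γ_{xy}|, and P̃ is another reversible chain on Ω with stationary distribution π̃. -/

import Mathlib

open scoped Classical

/-- Path Cauchy–Schwarz: for any walk `w` from `a` to `b`,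
`(f a - f b)^2` is at most `(length - 1)` times the sum of squared increments
over the (distinct) directed edges used by the walk. -/
lemma walk_sq_le {Ω : Type*} [Fintype Ω] (f : Ω → ℝ) :
    ∀ n (w : List Ω), w.length = n → ∀ a b : Ω,
      w[0]? = some a → w[w.length - 1]? = some b →
      (f a - f b) ^ 2 ≤ ((w.length - 1 : ℕ) : ℝ) *
        ∑ p : Ω × Ω,
          (if ∃ i, w[i]? = some p.1 ∧ w[i + 1]? = some p.2
            then (f p.1 - f p.2) ^ 2 else 0) := by
  intro n
  induction n using Nat.strong_induction_on with
  | _ n ih =>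
    intro w hw a b ha hb
    have hlen : 0 < w.length := by
      rcases List.getElem?_eq_some_iff.1 ha with ⟨h, _⟩; omega
    by_cases hnd : w.Nodup
    · -- the walk has distinct vertices; direct Cauchy–Schwarz
      set m := w.length - 1 with hm
      have ha' : w.getD 0 a = a := by
        rcases List.getElem?_eq_some_iff.1 ha with ⟨h, h'⟩
        rw [List.getD_eq_getElem _ _ h]; exact h'
      have hb' : w.getD m a = b := by
        rcases List.getElem?_eq_some_iff.1 hb with ⟨h, h'⟩
        rw [List.getD_eq_getElem _ _ h]; exact h'
      have tel : ∑ k ∈ Finset.range m,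
          (f (w.getD k a) - f (w.getD (k + 1) a)) = f a - f b := by
        rw [Finset.sum_range_sub' (fun k => f (w.getD k a)) m, ha', hb']
      have cs : (f a - f b) ^ 2 ≤ (m : ℝ) *
          ∑ k ∈ Finset.range m, (f (w.getD k a) - f (w.getD (k + 1) a)) ^ 2 := by
        rw [← tel]
        simpa using sq_sum_le_card_mul_sum_sq
          (s := Finset.range m) (f := fun k => f (w.getD k a) - f (w.getD (k + 1) a))
      set e : ℕ → Ω × Ω := fun k => (w.getD k a, w.getD (k + 1) a) with he
      have hinj : Set.InjOn e (Finset.range m) := by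
        intro k hk k' hk' hkk
        simp only [Finset.coe_range, Set.mem_Iio] at hk hk'
        have hk1 : k < w.length := by omega
        have hk1' : k' < w.length := by omega
        have h1 : w.getD k a = w.getD k' a := congrArg Prod.fst hkk
        rw [List.getD_eq_getElem _ _ hk1, List.getD_eq_getElem _ _ hk1'] at h1
        exact congrArg Fin.val (List.nodup_iff_injective_get.1 hnd (show w.get ⟨k, hk1⟩ = w.get ⟨k', hk1'⟩ from h1))
      have step : ∑ k ∈ Finset.range m, (f (w.getD k a) - f (w.getD (k + 1) a)) ^ 2 ≤
          ∑ p : Ω × Ω,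
            (if ∃ i, w[i]? = some p.1 ∧ w[i + 1]? = some p.2
              then (f p.1 - f p.2) ^ 2 else 0) := by
        have h1 : ∑ k ∈ Finset.range m, (f (w.getD k a) - f (w.getD (k + 1) a)) ^ 2 =
            ∑ p ∈ (Finset.range m).image e,
              (if ∃ i, w[i]? = some p.1 ∧ w[i + 1]? = some p.2
                then (f p.1 - f p.2) ^ 2 else 0) := by
          rw [Finset.sum_image (fun x hx y hy hxy => hinj (by simpa using hx) (by simpa using hy) hxy)]
          refine Finset.sum_congr rfl fun k hk => ?_
          have hkm : k < m := Finset.mem_range.1 hk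
          have hind : ∃ i, w[i]? = some (e k).1 ∧ w[i + 1]? = some (e k).2 := by
            refine ⟨k, ?_, ?_⟩
            · show w[k]? = some (w.getD k a)
              rw [List.getD_eq_getElem _ _ (show k < w.length by omega),
                List.getElem?_eq_getElem (by omega)]
            · show w[k + 1]? = some (w.getD (k + 1) a)
              rw [List.getD_eq_getElem _ _ (show k + 1 < w.length by omega),
                List.getElem?_eq_getElem (by omega)]
          rw [if_pos hind]
        rw [h1]
        refine Finset.sum_le_sum_of_subset_of_nonneg (Finset.subset_univ _) fun p _ _ => ?_
        split <;> positivity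
      calc (f a - f b) ^ 2 ≤ (m : ℝ) *
            ∑ k ∈ Finset.range m, (f (w.getD k a) - f (w.getD (k + 1) a)) ^ 2 := cs
        _ ≤ (m : ℝ) * ∑ p : Ω × Ω,
            (if ∃ i, w[i]? = some p.1 ∧ w[i + 1]? = some p.2
              then (f p.1 - f p.2) ^ 2 else 0) := by
          refine mul_le_mul_of_nonneg_left step (by positivity)
    · -- the walk revisits a vertex: excise the loop and use induction
      obtain ⟨i, j, hij, hget⟩ : ∃ i j : Fin w.length, (i : ℕ) < j ∧ w.get i = w.get j := by
        rw [List.nodup_iff_injective_get] at hnd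
        simp only [Function.Injective, not_forall] at hnd
        obtain ⟨k, k', hkk, hne⟩ := hnd
        rcases lt_or_gt_of_ne (fun h : (k : ℕ) = (k' : ℕ) => hne (Fin.ext h)) with h | h
        · exact ⟨k, k', h, hkk⟩
        · exact ⟨k', k, h, hkk.symm⟩
      set w' : List Ω := w.take ((i : ℕ) + 1) ++ w.drop ((j : ℕ) + 1) with hw'
      have hjlt : (j : ℕ) < w.length := j.2
      have hilt : (i : ℕ) < w.length := i.2
      have hlen' : w'.length = w.length - ((j : ℕ) - (i : ℕ)) := by
        simp only [hw', List.length_append, List.length_take, List.length_drop]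
        omega
      have hkey : ∀ k, w'[k]? =
          if k ≤ (i : ℕ) then w[k]? else w[k + ((j : ℕ) - (i : ℕ))]? := by
        intro k
        have hlt : (w.take ((i : ℕ) + 1)).length = (i : ℕ) + 1 := by
          rw [List.length_take]; omega
        by_cases hk : k ≤ (i : ℕ)
        · rw [if_pos hk, hw', List.getElem?_append_left (by omega), List.getElem?_take]
          rw [if_pos (by omega)]
        · rw [if_neg hk, hw', List.getElem?_append_right (by omega), List.getElem?_drop]
          congr 1
          rw [hlt]
          omega
      have hij' : w[(i : ℕ)]? = w[(j : ℕ)]? := by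
        rw [List.getElem?_eq_getElem hilt, List.getElem?_eq_getElem hjlt]
        simpa [List.get_eq_getElem] using congrArg some hget
      have h0' : w'[0]? = some a := by
        rw [hkey 0, if_pos (Nat.zero_le _)]; exact ha
      have hlast' : w'[w'.length - 1]? = some b := by
        rw [hkey]
        rcases Nat.lt_or_ge ((j : ℕ) + 1) w.length with hcase | hcase
        · rw [if_neg (by omega)]
          have : w'.length - 1 + ((j : ℕ) - (i : ℕ)) = w.length - 1 := by omega
          rw [this]; exact hb
        · have hji : (j : ℕ) = w.length - 1 := by omega
          have : w'.length - 1 = (i : ℕ) := by omega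
          rw [if_pos (by omega), this, hij', hji]
          exact hb
      have hsub : ∀ p : Ω × Ω,
          (∃ k, w'[k]? = some p.1 ∧ w'[k + 1]? = some p.2) →
          (∃ k, w[k]? = some p.1 ∧ w[k + 1]? = some p.2) := by
        rintro p ⟨k, h1, h2⟩
        rw [hkey] at h1 h2
        by_cases hk1 : k + 1 ≤ (i : ℕ)
        · rw [if_pos (by omega)] at h1
          rw [if_pos hk1] at h2
          exact ⟨k, h1, h2⟩
        · by_cases hk : k ≤ (i : ℕ)
          · have hki : k = (i : ℕ) := by omega
            rw [if_pos hk, hki, hij'] at h1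
            rw [if_neg hk1] at h2
            have : k + 1 + ((j : ℕ) - (i : ℕ)) = (j : ℕ) + 1 := by omega
            rw [this] at h2
            exact ⟨(j : ℕ), h1, h2⟩
          · rw [if_neg hk] at h1
            rw [if_neg hk1] at h2
            have : k + 1 + ((j : ℕ) - (i : ℕ)) = k + ((j : ℕ) - (i : ℕ)) + 1 := by omega
            rw [this] at h2
            exact ⟨k + ((j : ℕ) - (i : ℕ)), h1, h2⟩
      have hlen'lt : w'.length < n := by omega
      have ihh := ih w'.length hlen'lt w' rfl a b h0' hlast'
      have hsumle : ∑ p : Ω × Ω,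
            (if ∃ k, w'[k]? = some p.1 ∧ w'[k + 1]? = some p.2
              then (f p.1 - f p.2) ^ 2 else 0) ≤
          ∑ p : Ω × Ω,
            (if ∃ k, w[k]? = some p.1 ∧ w[k + 1]? = some p.2
              then (f p.1 - f p.2) ^ 2 else 0) := by
        refine Finset.sum_le_sum fun p _ => ?_
        by_cases h : ∃ k, w'[k]? = some p.1 ∧ w'[k + 1]? = some p.2
        · rw [if_pos h, if_pos (hsub p h)]
        · rw [if_neg h]; split <;> positivity
      refine ihh.trans ?_
      have hcast : ((w'.length - 1 : ℕ) : ℝ) ≤ ((w.length - 1 : ℕ) : ℝ) := by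
        exact_mod_cast Nat.sub_le_sub_right (by omega) 1
      refine mul_le_mul hcast hsumle ?_ (by positivity)
      refine Finset.sum_nonneg fun p _ => ?_
      split <;> positivity

/-- The Diaconis–Saloff-Coste path comparison theorem: if every transition of
the reversible chain `P̃` is routed along paths using transitions of the
reversible chain `P`, and `B` bounds the congestion ratio, then the Dirichlet
forms satisfy `E_{P̃}(f,f) ≤ B · E_P(f,f)` for every `f : Ω → ℝ`. -/
theorem path_comparison
    {Ω : Type*} [Fintype Ω] [Nonempty Ω]
    (π πt : Ω → ℝ) (P Pt : Ω → Ω → ℝ)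
    (hπ : ∀ x, 0 ≤ π x) (hπsum : ∑ x, π x = 1)
    (hπt : ∀ x, 0 ≤ πt x) (hπtsum : ∑ x, πt x = 1)
    (hP : ∀ x y, 0 ≤ P x y) (hProw : ∀ x, ∑ y, P x y = 1)
    (hPt : ∀ x y, 0 ≤ Pt x y) (hPtrow : ∀ x, ∑ y, Pt x y = 1)
    (hrev : ∀ x y, π x * P x y = π y * P y x)
    (hrevt : ∀ x y, πt x * Pt x y = πt y * Pt y x)
    (Γ : Ω → Ω → List Ω)
    (hΓhead : ∀ x y, (Γ x y).head? = some x)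
    (hΓlast : ∀ x y, (Γ x y).getLast? = some y)
    (hΓstep : ∀ x y i, i + 1 < (Γ x y).length →
      0 < P ((Γ x y).getD i x) ((Γ x y).getD (i + 1) x))
    (B : ℝ)
    (hB : ∀ x' y', 0 < P x' y' →
      (∑ p : Ω × Ω,
        if ∃ i : ℕ, (Γ p.1 p.2)[i]? = some x' ∧ (Γ p.1 p.2)[i + 1]? = some y'
        then πt p.1 * Pt p.1 p.2 * (((Γ p.1 p.2).length - 1 : ℕ) : ℝ)
        else 0) ≤ B * (π x' * P x' y'))
    (f : Ω → ℝ) :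
    (1 / 2) * ∑ x, ∑ y, (f x - f y) ^ 2 * (πt x * Pt x y) ≤
      B * ((1 / 2) * ∑ x, ∑ y, (f x - f y) ^ 2 * (π x * P x y)) := by
  -- the indicator for the edge `p` being used by the path from `q.1` to `q.2`
  set ind : Ω × Ω → Ω × Ω → Prop := fun q p =>
    ∃ i, (Γ q.1 q.2)[i]? = some p.1 ∧ (Γ q.1 q.2)[i + 1]? = some p.2 with hind
  -- step 1: per-transition path Cauchy–Schwarz bound
  have key : ∀ x y : Ω, (f x - f y) ^ 2 * (πt x * Pt x y) ≤
      ∑ p : Ω × Ω, (if ind (x, y) p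
        then πt x * Pt x y * (((Γ x y).length - 1 : ℕ) : ℝ) * (f p.1 - f p.2) ^ 2
        else 0) := by
    intro x y
    have hw := walk_sq_le f (Γ x y).length (Γ x y) rfl x y
      (by rw [← List.head?_eq_getElem?]; exact hΓhead x y)
      (by rw [← List.getLast?_eq_getElem?]; exact hΓlast x y)
    have hc : 0 ≤ πt x * Pt x y := mul_nonneg (hπt x) (hPt x y)
    calc (f x - f y) ^ 2 * (πt x * Pt x y)
        ≤ ((((Γ x y).length - 1 : ℕ) : ℝ) *
            ∑ p : Ω × Ω, (if ind (x, y) p then (f p.1 - f p.2) ^ 2 else 0)) *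
          (πt x * Pt x y) := by
          exact mul_le_mul_of_nonneg_right hw hc
      _ = ∑ p : Ω × Ω, (if ind (x, y) p
            then πt x * Pt x y * (((Γ x y).length - 1 : ℕ) : ℝ) * (f p.1 - f p.2) ^ 2
            else 0) := by
          rw [mul_comm, Finset.mul_sum, Finset.mul_sum]
          refine Finset.sum_congr rfl fun p _ => ?_
          split <;> ring
  -- step 2: sum over all transitions and swap the order of summation
  have swap : ∑ x, ∑ y, (f x - f y) ^ 2 * (πt x * Pt x y) ≤
      ∑ p : Ω × Ω,
        (∑ q : Ω × Ω, (if ind q p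
          then πt q.1 * Pt q.1 q.2 * (((Γ q.1 q.2).length - 1 : ℕ) : ℝ) else 0)) *
        (f p.1 - f p.2) ^ 2 := by
    calc ∑ x, ∑ y, (f x - f y) ^ 2 * (πt x * Pt x y)
        ≤ ∑ x, ∑ y, ∑ p : Ω × Ω, (if ind (x, y) p
            then πt x * Pt x y * (((Γ x y).length - 1 : ℕ) : ℝ) * (f p.1 - f p.2) ^ 2
            else 0) := by
          exact Finset.sum_le_sum fun x _ => Finset.sum_le_sum fun y _ => key x y
      _ = ∑ q : Ω × Ω, ∑ p : Ω × Ω, (if ind q p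
            then πt q.1 * Pt q.1 q.2 * (((Γ q.1 q.2).length - 1 : ℕ) : ℝ) * (f p.1 - f p.2) ^ 2
            else 0) :=
          (Fintype.sum_prod_type (fun q : Ω × Ω => ∑ p : Ω × Ω,
            if ind q p then πt q.1 * Pt q.1 q.2 * (((Γ q.1 q.2).length - 1 : ℕ) : ℝ) *
              (f p.1 - f p.2) ^ 2 else 0)).symm
      _ = ∑ p : Ω × Ω, ∑ q : Ω × Ω, (if ind q p
            then πt q.1 * Pt q.1 q.2 * (((Γ q.1 q.2).length - 1 : ℕ) : ℝ) * (f p.1 - f p.2) ^ 2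
            else 0) := Finset.sum_comm
      _ = ∑ p : Ω × Ω,
            (∑ q : Ω × Ω, (if ind q p
              then πt q.1 * Pt q.1 q.2 * (((Γ q.1 q.2).length - 1 : ℕ) : ℝ) else 0)) *
            (f p.1 - f p.2) ^ 2 := by
          refine Finset.sum_congr rfl fun p _ => ?_
          rw [Finset.sum_mul]
          refine Finset.sum_congr rfl fun q _ => ?_
          split <;> ring
  -- step 3: apply the congestion bound per edge
  have bound : ∀ p : Ω × Ω,
      (∑ q : Ω × Ω, (if ind q p
        then πt q.1 * Pt q.1 q.2 * (((Γ q.1 q.2).length - 1 : ℕ) : ℝ) else 0)) *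
      (f p.1 - f p.2) ^ 2 ≤
      B * (π p.1 * P p.1 p.2) * (f p.1 - f p.2) ^ 2 := by
    intro p
    by_cases hpos : 0 < P p.1 p.2
    · exact mul_le_mul_of_nonneg_right (hB p.1 p.2 hpos) (by positivity)
    · have hP0 : P p.1 p.2 = 0 := le_antisymm (not_lt.1 hpos) (hP p.1 p.2)
      have hz : (∑ q : Ω × Ω, (if ind q p
          then πt q.1 * Pt q.1 q.2 * (((Γ q.1 q.2).length - 1 : ℕ) : ℝ) else 0)) = 0 := by
        refine Finset.sum_eq_zero fun q _ => ?_
        rw [if_neg]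
        rintro ⟨i, h1, h2⟩
        obtain ⟨hi1, hv1⟩ := List.getElem?_eq_some_iff.1 h1
        obtain ⟨hi2, hv2⟩ := List.getElem?_eq_some_iff.1 h2
        have hstep := hΓstep q.1 q.2 i hi2
        rw [List.getD_eq_getElem _ _ hi1, List.getD_eq_getElem _ _ hi2, hv1, hv2] at hstep
        exact hpos hstep
      rw [hz, hP0, zero_mul]
      simp
  have final : ∑ x, ∑ y, (f x - f y) ^ 2 * (πt x * Pt x y) ≤
      B * ∑ x, ∑ y, (f x - f y) ^ 2 * (π x * P x y) := by
    calc ∑ x, ∑ y, (f x - f y) ^ 2 * (πt x * Pt x y)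
        ≤ ∑ p : Ω × Ω,
            (∑ q : Ω × Ω, (if ind q p
              then πt q.1 * Pt q.1 q.2 * (((Γ q.1 q.2).length - 1 : ℕ) : ℝ) else 0)) *
            (f p.1 - f p.2) ^ 2 := swap
      _ ≤ ∑ p : Ω × Ω, B * (π p.1 * P p.1 p.2) * (f p.1 - f p.2) ^ 2 :=
          Finset.sum_le_sum fun p _ => bound p
      _ = B * ∑ x, ∑ y, (f x - f y) ^ 2 * (π x * P x y) := by
          have h2 : ∑ p : Ω × Ω, B * (π p.1 * P p.1 p.2) * (f p.1 - f p.2) ^ 2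
              = ∑ x, ∑ y, B * (π x * P x y) * (f x - f y) ^ 2 :=
            Fintype.sum_prod_type
              (fun p : Ω × Ω => B * (π p.1 * P p.1 p.2) * (f p.1 - f p.2) ^ 2)
          rw [h2, Finset.mul_sum]
          refine Finset.sum_congr rfl fun x _ => ?_
          rw [Finset.mul_sum]
          refine Finset.sum_congr rfl fun y _ => ?_
          ring
  linarith
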